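/- Let A be a commutative ring and I ⊆ A an ideal defining an effective Cartier divisor on Spec(A), i.e., there is a covering sequence (s_1,...,s_n) of A such that each localized ideal I_{s_i} ⊆ A_{s_i} is generated by a single regular element. Then I is a weakly proregular ideal. -/

import Mathlib

/-!
We use an explicit model for the Koszul complex `K(A; aa)` of a finite sequence
`aa = (a_1, ..., a_n)` in a commutative ring `A`: the degree `-q` component is the
free module of functions on the `q`-element subsets of `Fin n` (corresponding to the
basis of `Λ^q(A^n)`), and the differential is contraction against `aa` with the usual
signs.  The transition map `μ_{j,i} : K(A; aa^j) → K(A; aa^i)` multiplies the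
component indexed by a subset `s` by `∏_{k ∈ s} a_k^(j-i)`.

A sequence is weakly proregular if for every `q < 0` the inverse system
`{H^q(K(A; aa^i))}` is pro-zero: for every `i` there is `j ≥ i` such that the
transition map `H^q(K(A; aa^j)) → H^q(K(A; aa^i))` is zero, i.e. every degree `-q`
cocycle at level `j` is sent by `μ_{j,i}` to a coboundary at level `i`.
-/

/-- The degree `-q` component of the Koszul complex on `n` elements. -/
abbrev KoszulDeg (A : Type*) (n q : ℕ) : Type _ :=
  {s : Finset (Fin n) // s.card = q} → A

/-- The Koszul differential `K(A; aa)^{-(q+1)} → K(A; aa)^{-q}`, given by contraction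
against the sequence `aa`, with the usual signs. -/
noncomputable def koszulD {A : Type*} [CommRing A] {n : ℕ} (aa : Fin n → A) (q : ℕ)
    (f : KoszulDeg A n (q + 1)) : KoszulDeg A n q :=
  fun s => ∑ i ∈ (s.val)ᶜ.attach,
    (-1 : A) ^ (s.val.filter (fun k => k < i.val)).card * aa i.val *
      f ⟨insert i.val s.val, by
        rw [Finset.card_insert_of_notMem (Finset.mem_compl.mp i.property), s.property]⟩

/-- The transition map `μ_{j,i}` of the inverse system of Koszul complexes, in degree
`-q`, for exponents `j ≥ i` with `e = j - i`: multiplication by `∏_{k ∈ s} a_k^e` on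
the component indexed by the subset `s`. -/
noncomputable def koszulTransition {A : Type*} [CommRing A] {n : ℕ} (aa : Fin n → A)
    (e q : ℕ) (f : KoszulDeg A n q) : KoszulDeg A n q :=
  fun s => (∏ k ∈ s.val, aa k ^ e) * f s

/-- A finite sequence `aa` in a commutative ring `A` is weakly proregular if for every
`q < 0` the inverse system of Koszul cohomologies `{H^q(K(A; aa^i))}_{i ∈ ℕ}` is
pro-zero: for each `i` there is `j ≥ i` such that every cocycle of `K(A; aa^j)` in
degree `q` becomes a coboundary in `K(A; aa^i)` after applying `μ_{j,i}`. -/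
def IsWeaklyProregular {A : Type*} [CommRing A] {n : ℕ} (aa : Fin n → A) : Prop :=
  ∀ q i : ℕ, ∃ j : ℕ, i ≤ j ∧ ∀ f : KoszulDeg A n (q + 1),
    koszulD (fun k => aa k ^ j) q f = 0 →
    ∃ g : KoszulDeg A n (q + 2),
      koszulD (fun k => aa k ^ i) (q + 1) g = koszulTransition aa (j - i) (q + 1) f

/-- An ideal is weakly proregular if it is generated by a weakly proregular finite
sequence. -/
def Ideal.IsWeaklyProregular {A : Type*} [CommRing A] (I : Ideal A) : Prop :=
  ∃ (n : ℕ) (aa : Fin n → A), Ideal.span (Set.range aa) = I ∧ _root_.IsWeaklyProregular aa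

namespace WPR

variable {A : Type*} [CommRing A] {n : ℕ}

/-- extension of a Koszul component to all finsets, by zero -/
noncomputable def ext {q : ℕ} (f : KoszulDeg A n q) : Finset (Fin n) → A :=
  fun S => if h : S.card = q then f ⟨S, h⟩ else 0

lemma ext_apply {q : ℕ} (f : KoszulDeg A n q) (S : Finset (Fin n)) (h : S.card = q) :
    ext f S = f ⟨S, h⟩ := dif_pos h

lemma ext_zero {q : ℕ} (S : Finset (Fin n)) : ext (0 : KoszulDeg A n q) S = 0 := by
  by_cases h : S.card = q <;> simp [ext, h]

/-- wedge with a covector -/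
noncomputable def wedge (dd : Fin n → A) (q : ℕ) (h : KoszulDeg A n q) :
    KoszulDeg A n (q + 1) :=
  fun s => ∑ u ∈ s.val.attach,
    (-1 : A) ^ (s.val.filter (fun k => k < u.val)).card * dd u.val *
      h ⟨s.val.erase u.val, by rw [Finset.card_erase_of_mem u.property, s.property]; omega⟩

lemma ext_koszulD (aa : Fin n → A) (q : ℕ) (f : KoszulDeg A n (q + 1))
    (S : Finset (Fin n)) (hS : S.card = q) :
    ext (koszulD aa q f) S
      = ∑ t ∈ Sᶜ, (-1 : A) ^ (S.filter (fun k => k < t)).card * aa t * ext f (insert t S) := by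
  rw [ext_apply _ _ hS]
  show koszulD aa q f ⟨S, hS⟩ = _
  rw [koszulD]
  rw [← Finset.sum_attach Sᶜ
    (fun t => (-1 : A) ^ (S.filter (fun k => k < t)).card * aa t * ext f (insert t S))]
  refine Finset.sum_congr rfl fun i _ => ?_
  congr 1
  exact (ext_apply f _ (by
    rw [Finset.card_insert_of_notMem (Finset.mem_compl.mp i.property), hS])).symm

lemma ext_wedge (dd : Fin n → A) (q : ℕ) (h : KoszulDeg A n q)
    (S : Finset (Fin n)) (hS : S.card = q + 1) :
    ext (wedge dd q h) S
      = ∑ u ∈ S, (-1 : A) ^ (S.filter (fun k => k < u)).card * dd u * ext h (S.erase u) := by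
  rw [ext_apply _ _ hS]
  show wedge dd q h ⟨S, hS⟩ = _
  rw [wedge]
  rw [← Finset.sum_attach S
    (fun u => (-1 : A) ^ (S.filter (fun k => k < u)).card * dd u * ext h (S.erase u))]
  refine Finset.sum_congr rfl fun i _ => ?_
  congr 1
  exact (ext_apply h _ (by rw [Finset.card_erase_of_mem i.property, hS]; omega)).symm

lemma koszulD_eq_ext (aa : Fin n → A) (q : ℕ) (f : KoszulDeg A n (q + 1))
    (s : {s : Finset (Fin n) // s.card = q}) :
    koszulD aa q f s = ext (koszulD aa q f) s.val := (ext_apply _ _ s.property).symm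

lemma wedge_eq_ext (dd : Fin n → A) (q : ℕ) (h : KoszulDeg A n q)
    (s : {s : Finset (Fin n) // s.card = q + 1}) :
    wedge dd q h s = ext (wedge dd q h) s.val := (ext_apply _ _ s.property).symm

lemma sgn_lemma (S : Finset (Fin n)) (t u : Fin n) (ht : t ∉ S) (hu : u ∈ S) :
    (-1 : A) ^ (S.filter (fun k => k < t)).card
        * (-1 : A) ^ ((insert t S).filter (fun k => k < u)).card
      = -((-1 : A) ^ (S.filter (fun k => k < u)).card
        * (-1 : A) ^ ((S.erase u).filter (fun k => k < t)).card) := by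
  have hne : t ≠ u := fun h => ht (h ▸ hu)
  rcases lt_or_gt_of_ne hne with hlt | hgt
  · have h1 : (insert t S).filter (fun k => k < u) = insert t (S.filter (fun k => k < u)) := by
      rw [Finset.filter_insert, if_pos hlt]
    have h2 : (S.erase u).filter (fun k => k < t) = S.filter (fun k => k < t) := by
      rw [Finset.filter_erase, Finset.erase_eq_of_notMem]
      simp [Finset.mem_filter, not_lt.2 hlt.le]
    rw [h1, h2, Finset.card_insert_of_notMem (fun hmem => ht (Finset.mem_filter.mp hmem).1),
      pow_succ]
    ring
  · have h1 : (insert t S).filter (fun k => k < u) = S.filter (fun k => k < u) := by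
      rw [Finset.filter_insert, if_neg (not_lt.2 hgt.le)]
    have h2 : S.filter (fun k => k < t) = insert u ((S.erase u).filter (fun k => k < t)) := by
      rw [Finset.filter_erase, Finset.insert_erase (Finset.mem_filter.mpr ⟨hu, hgt⟩)]
    rw [h1, h2, Finset.card_insert_of_notMem (by simp), pow_succ]
    ring

lemma cartan_ext (aa dd : Fin n → A) (q : ℕ) (h : KoszulDeg A n (q + 1))
    (S : Finset (Fin n)) (hS : S.card = q + 1) :
    ext (koszulD aa (q + 1) (wedge dd (q + 1) h)) S
        + ext (wedge dd q (koszulD aa q h)) S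
      = (∑ l, aa l * dd l) * ext h S := by
  have hEE : ∀ m : ℕ, (-1 : A) ^ m * (-1 : A) ^ m = 1 := fun m => by
    rw [← pow_add]; exact Even.neg_one_pow ⟨m, rfl⟩
  have e1 : ext (koszulD aa (q + 1) (wedge dd (q + 1) h)) S
      = (∑ t ∈ Sᶜ, aa t * dd t * ext h S)
        + ∑ t ∈ Sᶜ, ∑ u ∈ S,
            (-1 : A) ^ (S.filter (fun k => k < t)).card * aa t *
              ((-1 : A) ^ ((insert t S).filter (fun k => k < u)).card * dd u *
                ext h ((insert t S).erase u)) := by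
    rw [ext_koszulD _ _ _ _ hS, ← Finset.sum_add_distrib]
    refine Finset.sum_congr rfl fun t ht => ?_
    have htS : t ∉ S := Finset.mem_compl.mp ht
    rw [ext_wedge _ _ _ _ (by rw [Finset.card_insert_of_notMem htS, hS]),
      Finset.sum_insert htS, Finset.erase_insert htS,
      show (insert t S).filter (fun k => k < t) = S.filter (fun k => k < t) from by
        rw [Finset.filter_insert, if_neg (lt_irrefl t)],
      mul_add]
    congr 1
    · linear_combination (aa t * dd t * ext h S) * hEE (S.filter (fun k => k < t)).card
    · rw [Finset.mul_sum]
  have e2 : ext (wedge dd q (koszulD aa q h)) S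
      = (∑ u ∈ S, aa u * dd u * ext h S)
        + ∑ u ∈ S, ∑ t ∈ Sᶜ,
            (-1 : A) ^ (S.filter (fun k => k < u)).card * dd u *
              ((-1 : A) ^ ((S.erase u).filter (fun k => k < t)).card * aa t *
                ext h (insert t (S.erase u))) := by
    rw [ext_wedge _ _ _ _ hS, ← Finset.sum_add_distrib]
    refine Finset.sum_congr rfl fun u hu => ?_
    rw [ext_koszulD _ _ _ _ (by rw [Finset.card_erase_of_mem hu, hS]; omega),
      Finset.compl_erase, Finset.sum_insert (by simp [hu]),
      Finset.insert_erase hu,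
      show (S.erase u).filter (fun k => k < u) = S.filter (fun k => k < u) from by
        rw [Finset.filter_erase, Finset.erase_eq_of_notMem (by simp)],
      mul_add]
    congr 1
    · linear_combination (aa u * dd u * ext h S) * hEE (S.filter (fun k => k < u)).card
    · rw [Finset.mul_sum]
  rw [e1, e2]
  have cancel : (∑ t ∈ Sᶜ, ∑ u ∈ S,
            (-1 : A) ^ (S.filter (fun k => k < t)).card * aa t *
              ((-1 : A) ^ ((insert t S).filter (fun k => k < u)).card * dd u *
                ext h ((insert t S).erase u)))
        + ∑ u ∈ S, ∑ t ∈ Sᶜ,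
            (-1 : A) ^ (S.filter (fun k => k < u)).card * dd u *
              ((-1 : A) ^ ((S.erase u).filter (fun k => k < t)).card * aa t *
                ext h (insert t (S.erase u))) = 0 := by
    rw [Finset.sum_comm (s := S) (t := Sᶜ), ← Finset.sum_add_distrib]
    refine Finset.sum_eq_zero fun t ht => ?_
    rw [← Finset.sum_add_distrib]
    refine Finset.sum_eq_zero fun u hu => ?_
    have htS : t ∉ S := Finset.mem_compl.mp ht
    have hne : t ≠ u := fun h => htS (h ▸ hu)
    rw [show (insert t S).erase u = insert t (S.erase u) from
      Finset.erase_insert_of_ne hne]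
    linear_combination (aa t * dd u * ext h (insert t (S.erase u)))
      * sgn_lemma (A := A) S t u htS hu
  have diag : (∑ t ∈ Sᶜ, aa t * dd t * ext h S) + ∑ u ∈ S, aa u * dd u * ext h S
      = (∑ l, aa l * dd l) * ext h S := by
    rw [add_comm, Finset.sum_add_sum_compl, Finset.sum_mul]
  calc _ = ((∑ t ∈ Sᶜ, aa t * dd t * ext h S) + ∑ u ∈ S, aa u * dd u * ext h S)
          + ((∑ t ∈ Sᶜ, ∑ u ∈ S,
            (-1 : A) ^ (S.filter (fun k => k < t)).card * aa t *
              ((-1 : A) ^ ((insert t S).filter (fun k => k < u)).card * dd u *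
                ext h ((insert t S).erase u)))
        + ∑ u ∈ S, ∑ t ∈ Sᶜ,
            (-1 : A) ^ (S.filter (fun k => k < u)).card * dd u *
              ((-1 : A) ^ ((S.erase u).filter (fun k => k < t)).card * aa t *
                ext h (insert t (S.erase u)))) := by ring
    _ = _ := by rw [cancel, diag, add_zero]


lemma cartan (aa dd : Fin n → A) (q : ℕ) (h : KoszulDeg A n (q + 1))
    (s : {s : Finset (Fin n) // s.card = q + 1}) :
    koszulD aa (q + 1) (wedge dd (q + 1) h) s + wedge dd q (koszulD aa q h) s
      = (∑ l, aa l * dd l) * h s := by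
  rw [koszulD_eq_ext, wedge_eq_ext, cartan_ext aa dd q h s.val s.property,
    ext_apply h s.val s.property]

lemma koszulD_smul (aa : Fin n → A) (q : ℕ) (c : A) (f : KoszulDeg A n (q + 1)) :
    koszulD aa q (fun s => c * f s) = fun s => c * koszulD aa q f s := by
  funext s
  simp only [koszulD, Finset.mul_sum]
  exact Finset.sum_congr rfl fun i _ => by ring

lemma koszulD_finsum {ι : Type*} (aa : Fin n → A) (q : ℕ) (t : Finset ι)
    (G : ι → KoszulDeg A n (q + 1)) :
    koszulD aa q (fun s => ∑ k ∈ t, G k s) = fun s => ∑ k ∈ t, koszulD aa q (G k) s := by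
  funext s
  simp only [koszulD, Finset.mul_sum]
  rw [Finset.sum_comm]

lemma koszulD_zero (aa : Fin n → A) (q : ℕ) :
    koszulD aa q (0 : KoszulDeg A n (q + 1)) = 0 := by
  funext s
  simp [koszulD]

lemma wedge_zero (dd : Fin n → A) (q : ℕ) :
    wedge dd q (0 : KoszulDeg A n q) = 0 := by
  funext s
  simp [wedge]

lemma koszulTransition_zero (aa : Fin n → A) (e q : ℕ) :
    koszulTransition aa e q (0 : KoszulDeg A n q) = 0 := by
  funext s
  simp [koszulTransition]

lemma koszulD_transition (aa : Fin n → A) (i e q : ℕ) (f : KoszulDeg A n (q + 1)) :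
    koszulD (fun k => aa k ^ i) q (koszulTransition aa e (q + 1) f)
      = koszulTransition aa e q (koszulD (fun k => aa k ^ (i + e)) q f) := by
  funext s
  simp only [koszulD, koszulTransition, Finset.mul_sum]
  refine Finset.sum_congr rfl fun t _ => ?_
  rw [Finset.prod_insert (Finset.mem_compl.mp t.property), pow_add]
  ring

section Map

variable {B : Type*} [CommRing B]

def kmap (φ : A →+* B) {q : ℕ} (f : KoszulDeg A n q) : KoszulDeg B n q := fun s => φ (f s)

lemma kmap_koszulD (φ : A →+* B) (aa : Fin n → A) (q : ℕ) (f : KoszulDeg A n (q + 1)) :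
    kmap φ (koszulD aa q f) = koszulD (fun k => φ (aa k)) q (kmap φ f) := by
  funext s
  simp only [kmap, koszulD, map_sum, map_mul, map_pow, map_neg, map_one]

lemma kmap_transition (φ : A →+* B) (aa : Fin n → A) (e q : ℕ) (f : KoszulDeg A n q) :
    kmap φ (koszulTransition aa e q f)
      = koszulTransition (fun k => φ (aa k)) e q (kmap φ f) := by
  funext s
  simp only [kmap, koszulTransition, map_mul, map_prod, map_pow]

lemma kmap_zero (φ : A →+* B) (q : ℕ) : kmap φ (0 : KoszulDeg A n q) = 0 := by
  funext s
  exact map_zero φ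

end Map


lemma reg_pow {b : A} (hreg : ∀ x : A, b * x = 0 → x = 0) (e : ℕ) :
    ∀ x : A, b ^ e * x = 0 → x = 0 := by
  induction e with
  | zero => intro x hx; simpa using hx
  | succ e ih =>
    intro x hx
    refine hreg x (ih (b * x) ?_)
    rw [← hx, pow_succ]; ring

lemma span_pow_top (ss : Fin n → A) (h : Ideal.span (Set.range ss) = ⊤) (P : ℕ) :
    Ideal.span (Set.range fun k => ss k ^ P) = ⊤ := by
  rw [← Ideal.radical_eq_top]
  rw [eq_top_iff, ← h, Ideal.span_le]
  rintro _ ⟨k, rfl⟩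
  exact ⟨P, Ideal.subset_span ⟨k, rfl⟩⟩

/-- The key local computation. -/
lemma local_key {L : Type*} [CommRing L] {m : ℕ} (y : Fin m → L) (b : L)
    (hreg : ∀ x : L, b * x = 0 → x = 0)
    (hyb : ∀ l, ∃ v, y l = v * b)
    (hb : b ∈ Ideal.span (Set.range y)) (q i : ℕ) :
    ∃ M : ℕ, ∀ j, i + M ≤ j → ∀ f : KoszulDeg L m (q + 1),
      koszulD (fun k => y k ^ j) q f = 0 →
      ∃ g : KoszulDeg L m (q + 2),
        koszulD (fun k => y k ^ i) (q + 1) g = koszulTransition y (j - i) (q + 1) f := by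
  choose v hv using hyb
  have hrad : b ∈ (Ideal.span (Set.range fun l => y l ^ i)).radical := by
    have hle : Ideal.span (Set.range y) ≤ (Ideal.span (Set.range fun l => y l ^ i)).radical := by
      rw [Ideal.span_le]
      rintro _ ⟨l, rfl⟩
      exact ⟨i, Ideal.subset_span ⟨l, rfl⟩⟩
    exact hle hb
  obtain ⟨M, hM⟩ := hrad
  refine ⟨M, fun j hj f hf => ?_⟩
  set e := j - i with he
  have hie : i + e = j := by omega
  have hbe : b ^ e ∈ Ideal.span (Set.range fun l => y l ^ i) := by
    have : b ^ (e - M) * b ^ M ∈ Ideal.span (Set.range fun l => y l ^ i) :=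
      Ideal.mul_mem_left _ _ hM
    rwa [← pow_add, show e - M + M = e by omega] at this
  rw [← Ideal.submodule_span_eq, Submodule.mem_span_range_iff_exists_fun] at hbe
  obtain ⟨w, hw⟩ := hbe
  set h : KoszulDeg L m (q + 1) :=
    fun s => b ^ (q * e) * ((∏ l ∈ s.val, v l ^ e) * f s) with hh
  have key1 : koszulTransition y e (q + 1) f = fun s => b ^ e * h s := by
    funext s
    simp only [koszulTransition, hh]
    have : ∏ l ∈ s.val, y l ^ e = (∏ l ∈ s.val, v l ^ e) * (b ^ e) ^ (q + 1) :=
      calc ∏ l ∈ s.val, y l ^ e = ∏ l ∈ s.val, (v l ^ e * b ^ e) :=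
            Finset.prod_congr rfl fun l _ => by rw [hv l, mul_pow]
        _ = (∏ l ∈ s.val, v l ^ e) * ∏ l ∈ s.val, b ^ e := Finset.prod_mul_distrib
        _ = (∏ l ∈ s.val, v l ^ e) * (b ^ e) ^ (q + 1) := by
            rw [Finset.prod_const, s.property]
    rw [this, pow_succ, pow_mul]
    ring
  have key2 : koszulD (fun k => y k ^ i) q h = 0 := by
    have hc : koszulD (fun k => y k ^ i) q (fun s => b ^ e * h s) = 0 := by
      rw [← key1, koszulD_transition, hie, hf, koszulTransition_zero]
    rw [koszulD_smul] at hc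
    funext s
    exact reg_pow hreg e _ (congrFun hc s)
  refine ⟨wedge w (q + 1) h, ?_⟩
  funext s
  have := cartan (fun k => y k ^ i) w q h s
  rw [key2, wedge_zero] at this
  simp only [Pi.zero_apply, add_zero] at this
  rw [this, key1]
  congr 1
  rw [← hw]
  simp only [smul_eq_mul]
  exact Finset.sum_congr rfl fun l _ => mul_comm _ _



lemma pull_mem {A : Type*} [CommRing A] {r : A} {J : Ideal A} {z : A}
    (h : algebraMap A (Localization.Away r) z
      ∈ J.map (algebraMap A (Localization.Away r))) :
    ∃ e : ℕ, r ^ e * z ∈ J := by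
  rw [IsLocalization.mem_map_algebraMap_iff (Submonoid.powers r)] at h
  obtain ⟨⟨x, mm⟩, hx⟩ := h
  obtain ⟨e, he⟩ := mm.property
  rw [← he] at hx
  have h0 : algebraMap A (Localization.Away r) (z * r ^ e - x.val) = 0 := by
    rw [map_sub, map_mul, hx, sub_self]
  rw [IsLocalization.map_eq_zero_iff (Submonoid.powers r)] at h0
  obtain ⟨mm', hm'⟩ := h0
  obtain ⟨e', he'⟩ := mm'.property
  rw [← he'] at hm'
  refine ⟨e' + e, ?_⟩
  have heq : r ^ (e' + e) * z = r ^ e' * x.val := by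
    rw [pow_add]; linear_combination hm'
  rw [heq]
  exact J.mul_mem_left _ x.property


end WPR

/-- If `I ⊆ A` defines an effective Cartier divisor on `Spec A`, i.e. there is a
covering sequence `(s_1, ..., s_n)` of `A` such that each localized ideal
`I_{s_i} ⊆ A_{s_i}` is generated by a single regular element, then `I` is a weakly
proregular ideal. -/
theorem Ideal.isWeaklyProregular_of_effective_cartier {A : Type*} [CommRing A]
    (I : Ideal A) {n : ℕ} (s : Fin n → A)
    (hcov : Ideal.span (Set.range s) = ⊤)
    (hCartier : ∀ i : Fin n, ∃ b : Localization.Away (s i),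
      (∀ x : Localization.Away (s i), b * x = 0 → x = 0) ∧
      I.map (algebraMap A (Localization.Away (s i))) = Ideal.span {b}) :
    I.IsWeaklyProregular := by
  classical
  choose b hreg hspan using hCartier
  -- Step 1: a finite generating set for I
  have hTex : ∀ k : Fin n, ∃ T : Finset A, ↑T ⊆ (I : Set A) ∧
      b k ∈ Ideal.span (algebraMap A (Localization.Away (s k)) '' ↑T) := by
    intro k
    have hb : b k ∈ I.map (algebraMap A (Localization.Away (s k))) := by
      rw [hspan k]; exact Ideal.mem_span_singleton_self _
    rw [show I.map (algebraMap A (Localization.Away (s k)))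
        = Ideal.span (algebraMap A (Localization.Away (s k)) '' ↑I) from rfl,
      ← Ideal.submodule_span_eq] at hb
    obtain ⟨T0, hT0sub, hT0mem⟩ := Submodule.mem_span_finite_of_mem_span hb
    obtain ⟨T, hTsub, hTim⟩ := Finset.subset_set_image_iff.mp hT0sub
    refine ⟨T, hTsub, ?_⟩
    rw [← hTim] at hT0mem
    rw [← Ideal.submodule_span_eq, ← Finset.coe_image]
    exact hT0mem
  choose T hTI hTb using hTex
  set X : Finset A := Finset.univ.biUnion T with hX
  have hJI : Ideal.span (X : Set A) ≤ I := by
    rw [Ideal.span_le]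
    intro x hx
    rw [Finset.mem_coe, hX, Finset.mem_biUnion] at hx
    obtain ⟨k, -, hk⟩ := hx
    exact hTI k hk
  have hIJ : I ≤ Ideal.span (X : Set A) := by
    intro z hz
    have hloc : ∀ k : Fin n, ∃ e : ℕ, s k ^ e * z ∈ Ideal.span (X : Set A) := by
      intro k
      apply WPR.pull_mem
      have h1 : algebraMap A (Localization.Away (s k)) z
          ∈ I.map (algebraMap A (Localization.Away (s k))) :=
        Ideal.mem_map_of_mem _ hz
      rw [hspan k] at h1
      have h2 : Ideal.span {b k}
          ≤ (Ideal.span (X : Set A)).map (algebraMap A (Localization.Away (s k))) := by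
        rw [Ideal.span_singleton_le_iff_mem]
        have h3 : Ideal.span (algebraMap A (Localization.Away (s k)) '' ↑(T k))
            ≤ (Ideal.span (X : Set A)).map (algebraMap A (Localization.Away (s k))) := by
          rw [Ideal.map_span]
          refine Ideal.span_mono (Set.image_mono ?_)
          rw [hX]
          exact Finset.coe_subset.mpr (Finset.subset_biUnion_of_mem T (Finset.mem_univ k))
        exact h3 (hTb k)
      exact h2 h1
    choose ee hee using hloc
    set E := Finset.univ.sup ee with hEd
    have hEk : ∀ k, s k ^ E * z ∈ Ideal.span (X : Set A) := fun k => by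
      have h4 : s k ^ (E - ee k) * (s k ^ (ee k) * z) ∈ Ideal.span (X : Set A) :=
        Ideal.mul_mem_left _ _ (hee k)
      rwa [← mul_assoc, ← pow_add, show E - ee k + ee k = E from by
        have := Finset.le_sup (f := ee) (Finset.mem_univ k); omega] at h4
    have hone : (1 : A) ∈ Ideal.span (Set.range fun k => s k ^ E) := by
      rw [WPR.span_pow_top s hcov E]; trivial
    rw [← Ideal.submodule_span_eq, mem_span_range_iff_exists_fun] at hone
    obtain ⟨c, hc⟩ := hone
    have hz2 : z = ∑ k, c k * (s k ^ E * z) := by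
      calc z = (∑ k, c k • s k ^ E) * z := by simp only [smul_eq_mul]; rw [hc, one_mul]
        _ = ∑ k, c k * (s k ^ E * z) := by
            rw [Finset.sum_mul]
            exact Finset.sum_congr rfl fun k _ => by rw [smul_eq_mul, mul_assoc]
    rw [hz2]
    exact Ideal.sum_mem _ fun k _ => Ideal.mul_mem_left _ _ (hEk k)
  have hIX : Ideal.span (X : Set A) = I := le_antisymm hJI hIJ
  -- Step 2: index the generators
  set m := X.card with hm
  set aa : Fin m → A := fun t => (X.equivFin.symm t : A) with haa
  have hrange : Set.range aa = (X : Set A) := by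
    ext x
    constructor
    · rintro ⟨t, rfl⟩; exact (X.equivFin.symm t).property
    · intro hx
      exact ⟨X.equivFin ⟨x, hx⟩, by rw [haa]; simp⟩
  have hgen : Ideal.span (Set.range aa) = I := by rw [hrange, hIX]
  refine ⟨m, aa, hgen, ?_⟩
  intro q i
  -- Step 3: local data
  have hyspan : ∀ k, Ideal.span (Set.range fun l =>
      algebraMap A (Localization.Away (s k)) (aa l)) = Ideal.span {b k} := by
    intro k
    rw [show (Set.range fun l => algebraMap A (Localization.Away (s k)) (aa l))
        = algebraMap A (Localization.Away (s k)) '' Set.range aa from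
      Set.range_comp _ _, ← Ideal.map_span, hgen, hspan k]
  have hyb : ∀ k l, ∃ v, algebraMap A (Localization.Away (s k)) (aa l) = v * b k := by
    intro k l
    have h5 : algebraMap A (Localization.Away (s k)) (aa l) ∈ Ideal.span {b k} := by
      rw [← hyspan k]
      exact Ideal.subset_span (Set.mem_range_self l)
    obtain ⟨v, hv⟩ := Ideal.mem_span_singleton'.mp h5
    exact ⟨v, hv.symm⟩
  have hbmem : ∀ k, b k ∈ Ideal.span (Set.range fun l =>
      algebraMap A (Localization.Away (s k)) (aa l)) := by
    intro k
    rw [hyspan k]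
    exact Ideal.mem_span_singleton_self _
  have hkey := fun k => WPR.local_key
    (fun l => algebraMap A (Localization.Away (s k)) (aa l)) (b k)
    (hreg k) (hyb k) (hbmem k) q i
  choose M hM using hkey
  refine ⟨i + Finset.univ.sup M, Nat.le_add_right _ _, ?_⟩
  set j := i + Finset.univ.sup M with hjd
  intro f hf
  -- Step 4: per-element coboundary after multiplying by a power of s k
  have main : ∀ k : Fin n, ∃ (P : ℕ) (G : KoszulDeg A m (q + 2)),
      koszulD (fun l => aa l ^ i) (q + 1) G
        = fun σ => s k ^ P * koszulTransition aa (j - i) (q + 1) f σ := by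
    intro k
    have hfl : koszulD (fun l => algebraMap A (Localization.Away (s k)) (aa l) ^ j) q
        (WPR.kmap (algebraMap A (Localization.Away (s k))) f) = 0 := by
      have h0 := congrArg (WPR.kmap (algebraMap A (Localization.Away (s k)))) hf
      rw [WPR.kmap_koszulD, WPR.kmap_zero] at h0
      rw [show (fun l => algebraMap A (Localization.Away (s k)) (aa l) ^ j)
          = fun l => algebraMap A (Localization.Away (s k)) (aa l ^ j) from
        funext fun l => (_root_.map_pow _ _ j).symm]
      exact h0
    obtain ⟨g', hg'⟩ := hM k j
      (Nat.add_le_add_left (Finset.le_sup (Finset.mem_univ k)) i)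
      (WPR.kmap (algebraMap A (Localization.Away (s k))) f) hfl
    rw [← WPR.kmap_transition] at hg'
    have hsur : ∀ σ : {t : Finset (Fin m) // t.card = q + 2},
        ∃ (a : A) (e : ℕ), g' σ * algebraMap A (Localization.Away (s k)) (s k ^ e)
          = algebraMap A (Localization.Away (s k)) a := by
      intro σ
      obtain ⟨⟨a, mm⟩, hx⟩ := IsLocalization.surj (Submonoid.powers (s k)) (g' σ)
      obtain ⟨e, he⟩ := mm.property
      exact ⟨a, e, by rw [show s k ^ e = (mm : A) from he]; exact hx⟩
    choose num ee hnum using hsur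
    set E := Finset.univ.sup ee with hEd2
    set g'' : KoszulDeg A m (q + 2) := fun σ => num σ * s k ^ (E - ee σ) with hg''
    have hkg : WPR.kmap (algebraMap A (Localization.Away (s k))) g''
        = fun σ => algebraMap A (Localization.Away (s k)) (s k) ^ E * g' σ := by
      funext σ
      show algebraMap A (Localization.Away (s k)) (num σ * s k ^ (E - ee σ)) = _
      rw [_root_.map_mul, ← hnum σ, _root_.map_pow, _root_.map_pow, mul_assoc, ← pow_add,
        show ee σ + (E - ee σ) = E from by
          have := Finset.le_sup (f := ee) (Finset.mem_univ σ); omega]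
      ring
    have hcomp : WPR.kmap (algebraMap A (Localization.Away (s k)))
          (koszulD (fun l => aa l ^ i) (q + 1) g'')
        = WPR.kmap (algebraMap A (Localization.Away (s k)))
          (fun σ => s k ^ E * koszulTransition aa (j - i) (q + 1) f σ) := by
      rw [WPR.kmap_koszulD,
        show (fun l => algebraMap A (Localization.Away (s k)) (aa l ^ i))
            = fun l => algebraMap A (Localization.Away (s k)) (aa l) ^ i from
          funext fun l => _root_.map_pow _ _ i,
        hkg, WPR.koszulD_smul, hg']
      funext σ
      show algebraMap A (Localization.Away (s k)) (s k) ^ E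
          * WPR.kmap (algebraMap A (Localization.Away (s k)))
              (koszulTransition aa (j - i) (q + 1) f) σ
        = algebraMap A (Localization.Away (s k))
            (s k ^ E * koszulTransition aa (j - i) (q + 1) f σ)
      rw [_root_.map_mul, _root_.map_pow]
      rfl
    have hker : ∀ σ : {t : Finset (Fin m) // t.card = q + 1}, ∃ e' : ℕ, s k ^ e' *
        (koszulD (fun l => aa l ^ i) (q + 1) g'' σ
          - s k ^ E * koszulTransition aa (j - i) (q + 1) f σ) = 0 := by
      intro σ
      have h0 : algebraMap A (Localization.Away (s k))
          (koszulD (fun l => aa l ^ i) (q + 1) g'' σ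
            - s k ^ E * koszulTransition aa (j - i) (q + 1) f σ) = 0 := by
        rw [_root_.map_sub, sub_eq_zero]
        exact congrFun hcomp σ
      rw [IsLocalization.map_eq_zero_iff (Submonoid.powers (s k))] at h0
      obtain ⟨mm, hmm⟩ := h0
      obtain ⟨e', he'⟩ := mm.property
      refine ⟨e', ?_⟩
      rw [show s k ^ e' = (mm : A) from he']
      exact hmm
    choose ee2 hee2 using hker
    set E2 := Finset.univ.sup ee2 with hE2d
    refine ⟨E2 + E, fun σ => s k ^ E2 * g'' σ, ?_⟩
    rw [WPR.koszulD_smul]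
    funext σ
    have h6 : s k ^ (E2 - ee2 σ) * (s k ^ (ee2 σ) *
        (koszulD (fun l => aa l ^ i) (q + 1) g'' σ
          - s k ^ E * koszulTransition aa (j - i) (q + 1) f σ)) = 0 := by
      rw [hee2 σ, mul_zero]
    rw [← mul_assoc, ← pow_add, show E2 - ee2 σ + ee2 σ = E2 from by
      have := Finset.le_sup (f := ee2) (Finset.mem_univ σ); omega] at h6
    show s k ^ E2 * koszulD (fun l => aa l ^ i) (q + 1) g'' σ = _
    rw [pow_add]
    linear_combination h6
  choose P G hG using main
  set Pm := Finset.univ.sup P with hPmd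
  have hone : (1 : A) ∈ Ideal.span (Set.range fun k => s k ^ Pm) := by
    rw [WPR.span_pow_top s hcov Pm]; trivial
  rw [← Ideal.submodule_span_eq, mem_span_range_iff_exists_fun] at hone
  obtain ⟨c, hc⟩ := hone
  refine ⟨fun σ => ∑ k, c k * (s k ^ (Pm - P k) * G k σ), ?_⟩
  rw [WPR.koszulD_finsum]
  funext σ
  have hterm : ∀ k, koszulD (fun l => aa l ^ i) (q + 1)
        (fun σ => c k * (s k ^ (Pm - P k) * G k σ)) σ
      = c k * s k ^ Pm * koszulTransition aa (j - i) (q + 1) f σ := by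
    intro k
    rw [WPR.koszulD_smul (c := c k) (f := fun σ => s k ^ (Pm - P k) * G k σ),
      WPR.koszulD_smul (c := s k ^ (Pm - P k)) (f := G k), hG k]
    show c k * (s k ^ (Pm - P k) * (s k ^ (P k) * koszulTransition aa (j - i) (q + 1) f σ)) = _
    rw [← mul_assoc (s k ^ (Pm - P k)), ← pow_add, show Pm - P k + P k = Pm from by
      have := Finset.le_sup (f := P) (Finset.mem_univ k); omega]
    ring
  calc (∑ k, koszulD (fun l => aa l ^ i) (q + 1)
        (fun σ => c k * (s k ^ (Pm - P k) * G k σ)) σ)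
      = ∑ k, c k * s k ^ Pm * koszulTransition aa (j - i) (q + 1) f σ :=
        Finset.sum_congr rfl fun k _ => hterm k
    _ = (∑ k, c k • s k ^ Pm) * koszulTransition aa (j - i) (q + 1) f σ := by
        rw [Finset.sum_mul]
        exact Finset.sum_congr rfl fun k _ => by rw [smul_eq_mul]
    _ = koszulTransition aa (j - i) (q + 1) f σ := by simp only [smul_eq_mul]; rw [hc, one_mul]
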